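/- Let m, n, k, g be positive integers with g dividing n, and let 0 ≤ r ≤ m. Suppose there exist a g-regular 2-D ([m:r]×n,k,1)-OOC (which necessarily has Υ(m,r,n,g,k) = (m²−r²)(n−g)/(k(k−1)) codewords) and a 2-D ([m:r]×g,k,1)-OOC with b codewords. Then there exists a 2-D ([m:r]×n,k,1)-OOC with Υ(m,r,n,g,k) + b codewords. -/

import Mathlib

/-- The cyclic shift of a codeword `B ⊆ I_m × Z_n` by `τ`. -/
def OOCshift {m n : ℕ} (B : Finset (Fin m × ZMod n)) (τ : ZMod n) :
    Finset (Fin m × ZMod n) :=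
  B.image fun p => (p.1, p.2 + τ)

/-- A two-dimensional `(m × n, k, lam)` optical orthogonal code: a family of
`k`-element codewords of `I_m × Z_n` with auto- and cross-correlation at most `lam`. -/
def IsOOC (m n k lam : ℕ) (C : Finset (Finset (Fin m × ZMod n))) : Prop :=
  (∀ A ∈ C, A.card = k) ∧
  (∀ A ∈ C, ∀ τ : ZMod n, τ ≠ 0 → (A ∩ OOCshift A τ).card ≤ lam) ∧
  (∀ A ∈ C, ∀ B ∈ C, A ≠ B → ∀ τ : ZMod n, (A ∩ OOCshift B τ).card ≤ lam)

/-- The multiset `Δ_{ij}(C)` of all (pure and mixed) `(i,j)`-differences of the family `C`. -/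
def Delta {m n : ℕ} (i j : Fin m) (C : Finset (Finset (Fin m × ZMod n))) :
    Multiset (ZMod n) :=
  ∑ B ∈ C, (((B ×ˢ B).filter fun p => p.1 ≠ p.2 ∧ p.1.1 = i ∧ p.2.1 = j).val.map
      fun p => p.1.2 - p.2.2)

/-- A `g`-regular 2-D `([m : r] × n, k, 1)`-OOC with hole `R × Z_n` (`r = R.card`):
for `{i,j} ⊄ R` the multiset `Δ_{ij}(C)` is exactly `Z_n \ H` (each element once), where
`H = {z : g • z = 0}` is the subgroup of order `g` of `Z_n`, and `Δ_{ij}(C) = ∅` otherwise. -/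
def IsGRegOOC {m n : ℕ} (k g : ℕ) (R : Finset (Fin m))
    (C : Finset (Finset (Fin m × ZMod n))) : Prop :=
  (∀ A ∈ C, A.card = k) ∧
  ∀ i j : Fin m, ∀ z : ZMod n,
    Multiset.count z (Delta i j C) =
      if i ∈ R ∧ j ∈ R then 0 else if g • z = 0 then 0 else 1

namespace OOCaux

/-! ### The embedding of `Z_g` into `Z_n` -/

def phi (n g : ℕ) (x : ZMod g) : ZMod n := ((n / g) * x.val : ℕ)

section Phi
variable {n g : ℕ} (hn : 0 < n) (hg : 0 < g) (hgn : g ∣ n)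

include hn hg hgn

omit hn in
lemma phi_add (a b : ZMod g) : phi n g (a + b) = phi n g a + phi n g b := by
  haveI : NeZero g := ⟨hg.ne'⟩
  unfold phi
  rw [ZMod.val_add]
  conv_rhs => rw [← Nat.cast_add, ← Nat.mul_add]
  rw [← Nat.mod_add_div (a.val + b.val) g, Nat.mul_add, Nat.cast_add, ← Nat.mul_assoc,
    Nat.div_mul_cancel hgn]
  simp [Nat.mul_mod_right, Nat.cast_mul, ZMod.natCast_self]

omit hn in
lemma phi_sub (a b : ZMod g) : phi n g (a - b) = phi n g a - phi n g b := by
  have h := phi_add hg hgn (a - b) b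
  rw [sub_add_cancel] at h
  rw [h]; ring

lemma phi_inj : Function.Injective (phi n g) := by
  haveI : NeZero g := ⟨hg.ne'⟩
  intro a b hab
  have hng : 0 < n / g := Nat.div_pos (Nat.le_of_dvd hn hgn) hg
  have key : ∀ c : ZMod g, n / g * c.val < n := fun c => by
    have h := Nat.mul_lt_mul_of_pos_left (ZMod.val_lt c) hng
    calc n / g * c.val < n / g * g := h
    _ = n := Nat.div_mul_cancel hgn
  have hmod := (ZMod.natCast_eq_natCast_iff _ _ _).mp hab
  unfold Nat.ModEq at hmod
  rw [Nat.mod_eq_of_lt (key a), Nat.mod_eq_of_lt (key b)] at hmod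
  exact ZMod.val_injective _ (Nat.eq_of_mul_eq_mul_left hng hmod)

omit hn hg in
lemma g_smul_phi (w : ZMod g) : g • phi n g w = 0 := by
  unfold phi
  rw [nsmul_eq_mul, ← Nat.cast_mul, ← Nat.mul_assoc, Nat.mul_div_cancel' hgn,
    Nat.cast_mul, ZMod.natCast_self, zero_mul]

end Phi

/-! ### Counting differences -/

def term {m n : ℕ} (i j : Fin m) (z : ZMod n) (B : Finset (Fin m × ZMod n)) : ℕ :=
  ((B ×ˢ B).filter fun p =>
        (p.1 ≠ p.2 ∧ p.1.1 = i ∧ p.2.1 = j) ∧ z = p.1.2 - p.2.2).card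

lemma count_Delta {m n : ℕ} (i j : Fin m) (C : Finset (Finset (Fin m × ZMod n))) (z : ZMod n) :
    Multiset.count z (Delta i j C) = ∑ B ∈ C, term i j z B := by
  rw [Delta, Multiset.count_sum']
  refine Finset.sum_congr rfl fun B _ => ?_
  rw [Multiset.count_map]
  show ((((B ×ˢ B).filter fun p => p.1 ≠ p.2 ∧ p.1.1 = i ∧ p.2.1 = j)).filter
      fun p => z = p.1.2 - p.2.2).card = _
  rw [Finset.filter_filter]
  rfl

lemma mem_term {m n : ℕ} {i j : Fin m} {z : ZMod n} {B : Finset (Fin m × ZMod n)}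
    {p q : Fin m × ZMod n} :
    (p, q) ∈ ((B ×ˢ B).filter fun p =>
        (p.1 ≠ p.2 ∧ p.1.1 = i ∧ p.2.1 = j) ∧ z = p.1.2 - p.2.2) ↔
      p ∈ B ∧ q ∈ B ∧ p ≠ q ∧ p.1 = i ∧ q.1 = j ∧ z = p.2 - q.2 := by
  simp [Finset.mem_filter, Finset.mem_product, and_assoc]

lemma one_le_term {m n : ℕ} {i j : Fin m} {z : ZMod n} {B : Finset (Fin m × ZMod n)}
    {p q : Fin m × ZMod n} (hp : p ∈ B) (hq : q ∈ B) (hpq : p ≠ q)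
    (hi : p.1 = i) (hj : q.1 = j) (hz : z = p.2 - q.2) : 1 ≤ term i j z B :=
  Finset.card_pos.mpr ⟨(p, q), mem_term.mpr ⟨hp, hq, hpq, hi, hj, hz⟩⟩

lemma one_le_count {m n : ℕ} {C : Finset (Finset (Fin m × ZMod n))}
    {B : Finset (Fin m × ZMod n)} (hB : B ∈ C) {p q : Fin m × ZMod n}
    (hp : p ∈ B) (hq : q ∈ B) (hpq : p ≠ q) :
    1 ≤ Multiset.count (p.2 - q.2) (Delta p.1 q.1 C) := by
  rw [count_Delta]
  calc 1 ≤ term p.1 q.1 (p.2 - q.2) B := one_le_term hp hq hpq rfl rfl rfl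
  _ ≤ _ := Finset.single_le_sum (fun _ _ => Nat.zero_le _) hB

lemma two_le_count_of_cross {m n : ℕ} {C : Finset (Finset (Fin m × ZMod n))}
    {A B : Finset (Fin m × ZMod n)} (hA : A ∈ C) (hB : B ∈ C) (hAB : A ≠ B)
    {p q p' q' : Fin m × ZMod n} (hp : p ∈ A) (hq : q ∈ A) (hpq : p ≠ q)
    (hp' : p' ∈ B) (hq' : q' ∈ B) (hpq' : p' ≠ q')
    (h1 : p'.1 = p.1) (h2 : q'.1 = q.1) (h3 : p'.2 - q'.2 = p.2 - q.2) :
    2 ≤ Multiset.count (p.2 - q.2) (Delta p.1 q.1 C) := by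
  rw [count_Delta]
  have hsub : {A, B} ⊆ C := by
    intro x hx
    rcases Finset.mem_insert.mp hx with h | h
    · exact h ▸ hA
    · exact (Finset.mem_singleton.mp h) ▸ hB
  calc (2 : ℕ) = 1 + 1 := rfl
  _ ≤ term p.1 q.1 (p.2 - q.2) A + term p.1 q.1 (p.2 - q.2) B :=
      Nat.add_le_add (one_le_term hp hq hpq rfl rfl rfl)
        (one_le_term hp' hq' hpq' h1 h2 h3.symm)
  _ = ∑ X ∈ ({A, B} : Finset _), term p.1 q.1 (p.2 - q.2) X :=
      (Finset.sum_pair hAB).symm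
  _ ≤ _ := Finset.sum_le_sum_of_subset hsub

lemma two_le_count_of_auto {m n : ℕ} {C : Finset (Finset (Fin m × ZMod n))}
    {A : Finset (Fin m × ZMod n)} (hA : A ∈ C)
    {p q p' q' : Fin m × ZMod n} (hp : p ∈ A) (hq : q ∈ A) (hpq : p ≠ q)
    (hp' : p' ∈ A) (hq' : q' ∈ A) (hpq' : p' ≠ q') (hne : (p, q) ≠ (p', q'))
    (h1 : p'.1 = p.1) (h2 : q'.1 = q.1) (h3 : p'.2 - q'.2 = p.2 - q.2) :
    2 ≤ Multiset.count (p.2 - q.2) (Delta p.1 q.1 C) := by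
  rw [count_Delta]
  have h2' : 2 ≤ term p.1 q.1 (p.2 - q.2) A := by
    apply Finset.one_lt_card.mpr
    exact ⟨(p, q), mem_term.mpr ⟨hp, hq, hpq, rfl, rfl, rfl⟩,
      (p', q'), mem_term.mpr ⟨hp', hq', hpq', h1, h2, h3.symm⟩, hne⟩
  exact le_trans h2' (Finset.single_le_sum (fun _ _ => Nat.zero_le _) hA)

lemma exists_of_two_le_sum {α : Type*} [DecidableEq α] {s : Finset α} {f : α → ℕ}
    (h : 2 ≤ ∑ x ∈ s, f x) :
    (∃ x ∈ s, 2 ≤ f x) ∨ ∃ x ∈ s, ∃ y ∈ s, x ≠ y ∧ 1 ≤ f x ∧ 1 ≤ f y := by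
  by_contra hc
  push_neg at hc
  obtain ⟨h1, h2⟩ := hc
  have hle : ∑ x ∈ s, f x ≤ 1 := by
    by_cases hx : ∃ x ∈ s, 1 ≤ f x
    · obtain ⟨x, hxs, hfx⟩ := hx
      have hz : ∀ y ∈ s, y ≠ x → f y = 0 := by
        intro y hys hyx
        have := h2 x hxs y hys (Ne.symm hyx)
        omega
      rw [Finset.sum_eq_single x hz (fun hxs' => absurd hxs hxs')]
      exact Nat.lt_succ_iff.mp (h1 x hxs)
    · push_neg at hx
      rw [Finset.sum_eq_zero (fun x hxs => Nat.lt_one_iff.mp (hx x hxs))]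
      exact Nat.zero_le 1
  omega

/-! ### Equivalence between the correlation conditions and difference counting -/

lemma isOOC_of_count_le_one {m n k : ℕ} {C : Finset (Finset (Fin m × ZMod n))}
    (hcard : ∀ A ∈ C, A.card = k)
    (hcount : ∀ (i j : Fin m) (z : ZMod n), Multiset.count z (Delta i j C) ≤ 1) :
    IsOOC m n k 1 C := by
  refine ⟨hcard, ?_, ?_⟩
  · intro A hA τ hτ
    by_contra hc
    push_neg at hc
    obtain ⟨p, hp, q, hq, hpq⟩ := Finset.one_lt_card.mp hc
    obtain ⟨hpA, hpS⟩ := Finset.mem_inter.mp hp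
    obtain ⟨hqA, hqS⟩ := Finset.mem_inter.mp hq
    obtain ⟨p', hp', hpe⟩ := Finset.mem_image.mp hpS
    obtain ⟨q', hq', hqe⟩ := Finset.mem_image.mp hqS
    have hpq' : p' ≠ q' := by
      intro h; apply hpq; rw [← hpe, ← hqe, h]
    have hpe1 : p'.1 = p.1 := by rw [← hpe]
    have hpe2 : p'.2 + τ = p.2 := by rw [← hpe]
    have hqe1 : q'.1 = q.1 := by rw [← hqe]
    have hqe2 : q'.2 + τ = q.2 := by rw [← hqe]
    have hne : (p, q) ≠ (p', q') := by
      intro h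
      have hpp' : p = p' := congrArg Prod.fst h
      apply hτ
      rw [← hpp'] at hpe2
      linear_combination hpe2
    have key := two_le_count_of_auto hA hpA hqA hpq hp' hq' hpq' hne
      hpe1 hqe1 (by linear_combination hpe2 - hqe2)
    have := hcount p.1 q.1 (p.2 - q.2)
    omega
  · intro A hA B hB hAB τ
    by_contra hc
    push_neg at hc
    obtain ⟨p, hp, q, hq, hpq⟩ := Finset.one_lt_card.mp hc
    obtain ⟨hpA, hpS⟩ := Finset.mem_inter.mp hp
    obtain ⟨hqA, hqS⟩ := Finset.mem_inter.mp hq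
    obtain ⟨p', hp', hpe⟩ := Finset.mem_image.mp hpS
    obtain ⟨q', hq', hqe⟩ := Finset.mem_image.mp hqS
    have hpq' : p' ≠ q' := by
      intro h; apply hpq; rw [← hpe, ← hqe, h]
    have hpe1 : p'.1 = p.1 := by rw [← hpe]
    have hpe2 : p'.2 + τ = p.2 := by rw [← hpe]
    have hqe1 : q'.1 = q.1 := by rw [← hqe]
    have hqe2 : q'.2 + τ = q.2 := by rw [← hqe]
    have key := two_le_count_of_cross hA hB hAB hpA hqA hpq hp' hq' hpq'
      hpe1 hqe1 (by linear_combination hpe2 - hqe2)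
    have := hcount p.1 q.1 (p.2 - q.2)
    omega

lemma count_le_one_of_isOOC {m n k : ℕ} {C : Finset (Finset (Fin m × ZMod n))}
    (h : IsOOC m n k 1 C) (i j : Fin m) (z : ZMod n) :
    Multiset.count z (Delta i j C) ≤ 1 := by
  by_contra hc
  push_neg at hc
  rw [count_Delta] at hc
  rcases exists_of_two_le_sum hc with ⟨B, hB, hB2⟩ | ⟨B1, hB1, B2, hB2, hBne, hc1, hc2⟩
  · obtain ⟨P, hP, Q, hQ, hPQ⟩ := Finset.one_lt_card.mp hB2
    obtain ⟨hp1, hp2, hpne, hpi, hpj, hpz⟩ := mem_term.mp (show (P.1, P.2) ∈ _ from hP)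
    obtain ⟨hq1, hq2, hqne, hqi, hqj, hqz⟩ := mem_term.mp (show (Q.1, Q.2) ∈ _ from hQ)
    set τ := P.1.2 - Q.1.2 with hτdef
    by_cases hτ : τ = 0
    · apply hPQ
      have hτ0 : P.1.2 - Q.1.2 = 0 := hτ
      have h11 : P.1 = Q.1 := Prod.ext (hpi.trans hqi.symm) (by
        linear_combination hτ0)
      have h11s : P.1.2 = Q.1.2 := by rw [h11]
      have h22 : P.2 = Q.2 := Prod.ext (hpj.trans hqj.symm) (by
        linear_combination h11s - (hpz.symm.trans hqz))
      exact Prod.ext h11 h22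
    · have hcor := h.2.1 B hB τ hτ
      have : 2 ≤ (B ∩ OOCshift B τ).card := by
        apply Finset.one_lt_card.mpr
        refine ⟨P.1, ?_, P.2, ?_, hpne⟩
        · refine Finset.mem_inter.mpr ⟨hp1, Finset.mem_image.mpr ⟨Q.1, hq1, ?_⟩⟩
          exact Prod.ext (hqi.trans hpi.symm) (by rw [hτdef]; ring)
        · refine Finset.mem_inter.mpr ⟨hp2, Finset.mem_image.mpr ⟨Q.2, hq2, ?_⟩⟩
          exact Prod.ext (hqj.trans hpj.symm) (by
            rw [hτdef]
            linear_combination hqz - hpz)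
      omega
  · obtain ⟨P, hP⟩ := Finset.card_pos.mp hc1
    obtain ⟨Q, hQ⟩ := Finset.card_pos.mp hc2
    obtain ⟨hp1, hp2, hpne, hpi, hpj, hpz⟩ := mem_term.mp (show (P.1, P.2) ∈ _ from hP)
    obtain ⟨hq1, hq2, hqne, hqi, hqj, hqz⟩ := mem_term.mp (show (Q.1, Q.2) ∈ _ from hQ)
    set τ := P.1.2 - Q.1.2 with hτdef
    have hcor := h.2.2 B1 hB1 B2 hB2 hBne τ
    have : 2 ≤ (B1 ∩ OOCshift B2 τ).card := by
      apply Finset.one_lt_card.mpr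
      refine ⟨P.1, ?_, P.2, ?_, hpne⟩
      · refine Finset.mem_inter.mpr ⟨hp1, Finset.mem_image.mpr ⟨Q.1, hq1, ?_⟩⟩
        exact Prod.ext (hqi.trans hpi.symm) (by rw [hτdef]; ring)
      · refine Finset.mem_inter.mpr ⟨hp2, Finset.mem_image.mpr ⟨Q.2, hq2, ?_⟩⟩
        exact Prod.ext (hqj.trans hpj.symm) (by
          rw [hτdef]
          linear_combination hqz - hpz)
    omega

/-! ### Relabelling the hole -/

lemma exists_perm {m : ℕ} {R1 R2 : Finset (Fin m)} (h : R1.card = R2.card) :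
    ∃ σ : Equiv.Perm (Fin m), ∀ i, σ i ∈ R1 ↔ i ∈ R2 := by
  classical
  have e1 : {x // x ∈ R2} ≃ {x // x ∈ R1} :=
    Fintype.equivOfCardEq (by simp [Fintype.card_coe, h])
  have e2 : {x // x ∉ R2} ≃ {x // x ∉ R1} :=
    Fintype.equivOfCardEq (by
      rw [Fintype.card_subtype_compl, Fintype.card_subtype_compl]
      simp [Fintype.card_coe, h])
  refine ⟨(Equiv.sumCompl (· ∈ R2)).symm.trans ((e1.sumCongr e2).trans
    (Equiv.sumCompl (· ∈ R1))), fun i => ?_⟩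
  by_cases hi : i ∈ R2
  · simp [Equiv.sumCompl_symm_apply_of_pos hi, (e1 ⟨i, hi⟩).2, hi]
  · simp only [Equiv.trans_apply, Equiv.sumCompl_symm_apply_of_neg hi,
      Equiv.sumCongr_apply, Sum.map_inr, Equiv.sumCompl_apply_inr]
    exact iff_of_false (e2 ⟨i, hi⟩).2 hi

/-! ### The embedded small code -/

lemma prod_map {α β : Type*} [DecidableEq α] [DecidableEq β] (e : α ↪ β) (B : Finset α) :
    (B.map e) ×ˢ (B.map e) = (B ×ˢ B).map (e.prodMap e) := by
  ext ⟨a, b⟩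
  simp only [Finset.mem_product, Finset.mem_map, Function.Embedding.prodMap,
    Function.Embedding.coeFn_mk, Prod.map, Prod.ext_iff]
  constructor
  · rintro ⟨⟨x, hx, hxa⟩, ⟨y, hy, hyb⟩⟩
    exact ⟨(x, y), ⟨hx, hy⟩, hxa, hyb⟩
  · rintro ⟨⟨x, y⟩, ⟨hx, hy⟩, hxa, hyb⟩
    exact ⟨⟨x, hx, hxa⟩, ⟨y, hy, hyb⟩⟩

lemma delta_map {m n g : ℕ} (hphisub : ∀ a b : ZMod g, phi n g (a - b) = phi n g a - phi n g b)
    (hphiinj : Function.Injective (phi n g))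
    (σ : Equiv.Perm (Fin m))
    (e : (Fin m × ZMod g) ↪ (Fin m × ZMod n)) (he : ∀ p, e p = (σ p.1, phi n g p.2))
    (C : Finset (Finset (Fin m × ZMod g))) (i j : Fin m) :
    Delta i j (C.map (Finset.mapEmbedding e).toEmbedding)
      = (Delta (σ.symm i) (σ.symm j) C).map (phi n g) := by
  rw [Delta, Delta, Finset.sum_map, show Multiset.map (phi n g) =
      ⇑(Multiset.mapAddMonoidHom (phi n g)) from (Multiset.coe_mapAddMonoidHom _).symm,
    map_sum (Multiset.mapAddMonoidHom (phi n g))]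
  refine Finset.sum_congr rfl fun B _ => ?_
  rw [RelEmbedding.coe_toEmbedding, Finset.mapEmbedding_apply, prod_map, Finset.filter_map,
    Finset.map_val, Multiset.map_map, show ⇑(Multiset.mapAddMonoidHom (phi n g)) =
    Multiset.map (phi n g) from Multiset.coe_mapAddMonoidHom _, Multiset.map_map]
  have hpred : ∀ p : (Fin m × ZMod g) × (Fin m × ZMod g),
      ((fun p : (Fin m × ZMod n) × (Fin m × ZMod n) => p.1 ≠ p.2 ∧ p.1.1 = i ∧ p.2.1 = j)
        ∘ (e.prodMap e)) p ↔ (p.1 ≠ p.2 ∧ p.1.1 = σ.symm i ∧ p.2.1 = σ.symm j) := by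
    rintro ⟨a, b⟩
    simp only [Function.comp_apply, Function.Embedding.prodMap, Function.Embedding.coeFn_mk,
      Prod.map, he]
    constructor
    · rintro ⟨h1, h2, h3⟩
      refine ⟨fun hab => h1 (by rw [hab]), ?_, ?_⟩
      · exact (Equiv.eq_symm_apply σ).mpr h2
      · exact (Equiv.eq_symm_apply σ).mpr h3
    · rintro ⟨h1, h2, h3⟩
      refine ⟨?_, ?_, ?_⟩
      · intro hab
        apply h1
        have e1 : a.1 = b.1 := σ.injective (congrArg Prod.fst hab)
        have e2 : a.2 = b.2 := hphiinj (congrArg Prod.snd hab)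
        exact Prod.ext e1 e2
      · rw [h2, Equiv.apply_symm_apply]
      · rw [h3, Equiv.apply_symm_apply]
  rw [Finset.filter_congr (fun p _ => hpred p)]
  apply Multiset.map_congr rfl
  intro p hp
  simp only [Function.comp_apply, Function.Embedding.prodMap, Function.Embedding.coeFn_mk,
    Prod.map, he, hphisub]

end OOCaux

open OOCaux

theorem stmt_6 (m n k g r b : ℕ) (hm : 0 < m) (hn : 0 < n) (hk : 0 < k) (hg : 0 < g)
    (hgn : g ∣ n) (hrm : r ≤ m)
    (h1 : ∃ (R : Finset (Fin m)) (C : Finset (Finset (Fin m × ZMod n))),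
        R.card = r ∧ IsGRegOOC k g R C ∧
        C.card = (m ^ 2 - r ^ 2) * (n - g) / (k * (k - 1)))
    (h2 : ∃ (R : Finset (Fin m)) (C : Finset (Finset (Fin m × ZMod g))),
        R.card = r ∧ IsOOC m g k 1 C ∧ (∀ i ∈ R, ∀ j ∈ R, Delta i j C = 0) ∧
        C.card = b) :
    ∃ (R : Finset (Fin m)) (C : Finset (Finset (Fin m × ZMod n))),
      R.card = r ∧ IsOOC m n k 1 C ∧ (∀ i ∈ R, ∀ j ∈ R, Delta i j C = 0) ∧
      C.card = (m ^ 2 - r ^ 2) * (n - g) / (k * (k - 1)) + b := by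
  classical
  obtain ⟨R1, C1, hR1, ⟨hC1card, hC1delta⟩, hC1size⟩ := h1
  obtain ⟨R2, C2, hR2, hC2ooc, hC2hole, hC2size⟩ := h2
  obtain ⟨σ, hσ⟩ := exists_perm (show R1.card = R2.card by rw [hR1, hR2])
  have einj : Function.Injective
      (fun p : Fin m × ZMod g => ((σ p.1, phi n g p.2) : Fin m × ZMod n)) := by
    intro a b hab
    exact Prod.ext (σ.injective (congrArg Prod.fst hab))
      (phi_inj hn hg hgn (congrArg Prod.snd hab))
  set e : (Fin m × ZMod g) ↪ (Fin m × ZMod n) := ⟨_, einj⟩ with he_def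
  have he : ∀ p, e p = (σ p.1, phi n g p.2) := fun p => rfl
  set Cemb := C2.map (Finset.mapEmbedding e).toEmbedding with hCemb_def
  have hdm : ∀ i j : Fin m,
      Delta i j Cemb = (Delta (σ.symm i) (σ.symm j) C2).map (phi n g) :=
    fun i j => delta_map (phi_sub hg hgn) (phi_inj hn hg hgn) σ e he C2 i j
  have hEcount1 : ∀ (i j : Fin m) (z : ZMod n), Multiset.count z (Delta i j Cemb) ≤ 1 := by
    intro i j z
    rw [hdm]
    by_cases hw : ∃ w, phi n g w = z
    · obtain ⟨w, rfl⟩ := hw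
      rw [Multiset.count_map_eq_count' _ _ (phi_inj hn hg hgn)]
      exact count_le_one_of_isOOC hC2ooc _ _ _
    · rw [Multiset.count_eq_zero.mpr]
      · exact Nat.zero_le 1
      · intro hz
        obtain ⟨w, _, hw'⟩ := Multiset.mem_map.mp hz
        exact hw ⟨w, hw'⟩
  have hEcount0 : ∀ (i j : Fin m) (z : ZMod n), g • z ≠ 0 →
      Multiset.count z (Delta i j Cemb) = 0 := by
    intro i j z hz
    rw [hdm, Multiset.count_eq_zero]
    intro hmem
    obtain ⟨w, _, rfl⟩ := Multiset.mem_map.mp hmem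
    exact hz (g_smul_phi hgn w)
  have hEhole : ∀ i ∈ R1, ∀ j ∈ R1, Delta i j Cemb = 0 := by
    intro i hi j hj
    rw [hdm]
    have h2i : σ.symm i ∈ R2 := by
      rw [← hσ (σ.symm i), Equiv.apply_symm_apply]; exact hi
    have h2j : σ.symm j ∈ R2 := by
      rw [← hσ (σ.symm j), Equiv.apply_symm_apply]; exact hj
    rw [hC2hole _ h2i _ h2j, Multiset.map_zero]
  have hdis : Disjoint C1 Cemb := by
    rw [Finset.disjoint_left]
    intro A hA1 hA2
    rcases Nat.lt_or_ge k 2 with hk2 | hk2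
    · have hk1 : k = 1 := by omega
      have hzero : C1.card = 0 := by rw [hC1size, hk1]; simp
      rw [Finset.card_eq_zero] at hzero
      rw [hzero] at hA1
      exact absurd hA1 (Finset.notMem_empty A)
    · have hcardA : 1 < A.card := by rw [hC1card A hA1]; exact hk2
      obtain ⟨p, hp, q, hq, hpq⟩ := Finset.one_lt_card.mp hcardA
      have h1c := one_le_count hA1 hp hq hpq
      obtain ⟨B, hB, hBA⟩ := Finset.mem_map.mp hA2
      rw [RelEmbedding.coe_toEmbedding, Finset.mapEmbedding_apply] at hBA
      rw [← hBA] at hp hq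
      obtain ⟨p', _, hpe⟩ := Finset.mem_map.mp hp
      obtain ⟨q', _, hqe⟩ := Finset.mem_map.mp hq
      have hz0 : g • (p.2 - q.2) = 0 := by
        have hps : p.2 = phi n g p'.2 := by rw [← hpe]; rfl
        have hqs : q.2 = phi n g q'.2 := by rw [← hqe]; rfl
        rw [hps, hqs, ← phi_sub hg hgn]
        exact g_smul_phi hgn _
      rw [hC1delta] at h1c
      simp [hz0] at h1c
  set C := C1 ∪ Cemb with hC_def
  have hcount : ∀ (i j : Fin m) (z : ZMod n), Multiset.count z (Delta i j C) =
      Multiset.count z (Delta i j C1) + Multiset.count z (Delta i j Cemb) := by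
    intro i j z
    have : Delta i j C = Delta i j C1 + Delta i j Cemb := by
      rw [Delta, Delta, Delta, hC_def, Finset.sum_union hdis]
    rw [this, Multiset.count_add]
  refine ⟨R1, C, hR1, ?_, ?_, ?_⟩
  · apply isOOC_of_count_le_one
    · intro A hA
      rcases Finset.mem_union.mp hA with h | h
      · exact hC1card A h
      · obtain ⟨B, hB, hBA⟩ := Finset.mem_map.mp h
        rw [← hBA, RelEmbedding.coe_toEmbedding, Finset.mapEmbedding_apply, Finset.card_map]
        exact hC2ooc.1 B hB
    · intro i j z
      rw [hcount]
      by_cases hz : g • z = 0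
      · have h0 : Multiset.count z (Delta i j C1) = 0 := by
          rw [hC1delta]
          simp [hz]
        rw [h0]
        simpa using hEcount1 i j z
      · rw [hEcount0 i j z hz]
        have h1 : Multiset.count z (Delta i j C1) ≤ 1 := by
          rw [hC1delta]; split_ifs <;> omega
        omega
  · intro i hi j hj
    have hall : ∀ z : ZMod n, Multiset.count z (Delta i j C) = 0 := by
      intro z
      rw [hcount]
      have e1 : Multiset.count z (Delta i j C1) = 0 := by
        rw [hC1delta]
        simp [hi, hj]
      have e2 : Multiset.count z (Delta i j Cemb) = 0 := by
        rw [hEhole i hi j hj]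
        simp
      omega
    apply Multiset.eq_zero_of_forall_notMem
    intro z hz
    exact absurd (hall z) (by simpa [Multiset.count_eq_zero] using hz)
  · rw [hC_def, Finset.card_union_of_disjoint hdis, hC1size, hCemb_def, Finset.card_map, hC2size]
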